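/- Let α, β ∈ (0,1) satisfy G(1−β)/G(β) = 2·G(1−α)/G(α) (the classical modular equation of degree 2, i.e. μ(s) = 2μ(r) with α = r², β = s²). Then β = ((1 − √(1−α))/(1 + √(1−α)))². -/

import Mathlib

/-- The hypergeometric function `₂F₁(1/2, 1/2; 1; x)`, defined for `x ∈ (0,1)` by its
power series `∑ ((1/2)ₙ (1/2)ₙ / (n!)²) xⁿ`, where `(a)ₙ` is the rising factorial. -/
noncomputable def G (x : ℝ) : ℝ :=
  ∑' n : ℕ, (Polynomial.eval (1/2 : ℝ) (ascPochhammer ℝ n) *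
      Polynomial.eval (1/2 : ℝ) (ascPochhammer ℝ n) / (n.factorial : ℝ)^2) * x^n

open Real Set Filter MeasureTheory Finset intervalIntegral

set_option linter.constructorNameAsVariable false



noncomputable def w (n : ℕ) : ℝ := (ascPochhammer ℝ n).eval (1/2 : ℝ) / n.factorial

lemma w_zero : w 0 = 1 := by simp [w]

lemma w_succ (n : ℕ) : w (n + 1) = w n * ((2 * n + 1) / (2 * n + 2)) := by
  have h : ((n + 1).factorial : ℝ) = (n + 1) * n.factorial := by
    rw [Nat.factorial_succ]; push_cast; ring
  rw [w, w, ascPochhammer_succ_right, Polynomial.eval_mul, h]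
  have h2 : (n.factorial : ℝ) ≠ 0 := Nat.cast_ne_zero.2 n.factorial_ne_zero
  have h3 : ((n : ℝ) + 1) ≠ 0 := by positivity
  field_simp
  simp only [Polynomial.eval_add, Polynomial.eval_X, Polynomial.eval_natCast]
  ring

lemma w_pos (n : ℕ) : 0 < w n := by
  induction n with
  | zero => simp [w_zero]
  | succ n ih => rw [w_succ]; positivity

lemma w_le_one (n : ℕ) : w n ≤ 1 := by
  induction n with
  | zero => simp [w_zero]
  | succ n ih =>
    rw [w_succ]
    have h1 : (2 * (n:ℝ) + 1) / (2 * n + 2) ≤ 1 := by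
      rw [div_le_one (by positivity)]; linarith
    nlinarith [w_pos n]

/-- key convolution identity -/
lemma w_conv (n : ℕ) : ∑ k ∈ range (n + 1), w k * w (n - k) = 1 := by
  induction n with
  | zero => simp [w_zero]
  | succ n ih =>
    -- symmetry: ∑_{k∈range (m+1)} k * (w k * w (m-k)) = m/2 * ∑ w k w (m-k)
    have sym : ∀ m : ℕ, ∑ k ∈ range (m + 1), (k : ℝ) * (w k * w (m - k))
        = m / 2 * ∑ k ∈ range (m + 1), w k * w (m - k) := by
      intro m
      have refl := Finset.sum_range_reflect (fun k => (k : ℝ) * (w k * w (m - k))) (m + 1)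
      have e1 : ∑ k ∈ range (m + 1), ((m - k : ℕ) : ℝ) * (w (m - k) * w (m - (m - k)))
          = ∑ k ∈ range (m + 1), ((m : ℝ) - k) * (w (m - k) * w k) := by
        apply Finset.sum_congr rfl
        intro k hk
        have hk' : k ≤ m := Nat.lt_succ_iff.mp (Finset.mem_range.mp hk)
        rw [Nat.cast_sub hk', Nat.sub_sub_self hk']
      have e2 : ∑ k ∈ range (m + 1), ((m + 1 - 1 - k : ℕ) : ℝ) * (w (m + 1 - 1 - k) * w (m - (m + 1 - 1 - k)))
          = ∑ k ∈ range (m + 1), ((m - k : ℕ) : ℝ) * (w (m - k) * w (m - (m - k))) := by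
        simp
      rw [e2, e1] at refl
      have : 2 * ∑ k ∈ range (m + 1), (k : ℝ) * (w k * w (m - k))
          = (m : ℝ) * ∑ k ∈ range (m + 1), w k * w (m - k) := by
        calc 2 * ∑ k ∈ range (m + 1), (k : ℝ) * (w k * w (m - k))
            = ∑ k ∈ range (m + 1), (k : ℝ) * (w k * w (m - k))
              + ∑ k ∈ range (m + 1), ((m : ℝ) - k) * (w (m - k) * w k) := by
              rw [← refl]; ring
          _ = ∑ k ∈ range (m + 1), (m : ℝ) * (w k * w (m - k)) := by
              rw [← Finset.sum_add_distrib]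
              apply Finset.sum_congr rfl; intro k _; ring
          _ = (m : ℝ) * ∑ k ∈ range (m + 1), w k * w (m - k) := by
              rw [Finset.mul_sum]
      linarith
    -- step
    have step1 : ∑ k ∈ range (n + 2), (k : ℝ) * (w k * w (n + 1 - k))
        = ∑ j ∈ range (n + 1), ((j : ℝ) + 1) * (w (j + 1) * w (n - j)) := by
      rw [Finset.sum_range_succ'];
      simp only [Nat.cast_zero, zero_mul, add_zero]
      apply Finset.sum_congr rfl; intro j _
      have : n + 1 - (j + 1) = n - j := by omega
      rw [this]; push_cast; ring
    have step2 : ∑ j ∈ range (n + 1), ((j : ℝ) + 1) * (w (j + 1) * w (n - j))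
        = ∑ j ∈ range (n + 1), ((j : ℝ) + 1/2) * (w j * w (n - j)) := by
      apply Finset.sum_congr rfl; intro j _
      rw [w_succ]
      have h : ((j:ℝ) + 1) * (w j * ((2 * j + 1) / (2 * j + 2))) = (j + 1/2) * w j := by
        have h2 : (2 * (j:ℝ) + 2) ≠ 0 := by positivity
        field_simp
      calc ((j:ℝ) + 1) * (w j * ((2 * j + 1) / (2 * j + 2)) * w (n - j))
          = (((j:ℝ) + 1) * (w j * ((2 * j + 1) / (2 * j + 2)))) * w (n - j) := by ring
        _ = (((j:ℝ) + 1/2) * w j) * w (n - j) := by rw [h]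
        _ = ((j:ℝ) + 1/2) * (w j * w (n - j)) := by ring
    have step3 : ∑ j ∈ range (n + 1), ((j : ℝ) + 1/2) * (w j * w (n - j))
        = (n / 2 + 1/2) * 1 := by
      have : ∑ j ∈ range (n + 1), ((j : ℝ) + 1/2) * (w j * w (n - j))
          = (∑ j ∈ range (n + 1), (j : ℝ) * (w j * w (n - j)))
            + 1/2 * ∑ j ∈ range (n + 1), w j * w (n - j) := by
        rw [Finset.mul_sum, ← Finset.sum_add_distrib]
        apply Finset.sum_congr rfl; intro j _; ring
      rw [this, sym n, ih]; ring
    have final := sym (n + 1)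
    rw [step1, step2, step3] at final
    have hpos : ((n : ℝ) + 1) / 2 ≠ 0 := by positivity
    have h1 : ((n:ℝ)+1)/2 * (∑ k ∈ range (n+1+1), w k * w (n+1-k)) = ((n:ℝ)+1)/2 * 1 := by
      push_cast at final ⊢; linarith
    have := mul_left_cancel₀ hpos h1
    simpa using this



lemma summable_wx {x : ℝ} (h0 : 0 ≤ x) (h1 : x < 1) : Summable (fun n => w n * x ^ n) := by
  refine Summable.of_nonneg_of_le (fun n => mul_nonneg (w_pos n).le (pow_nonneg h0 n)) (fun n => ?_)
    (summable_geometric_of_lt_one h0 h1)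
  calc w n * x ^ n ≤ 1 * x ^ n := by
        apply mul_le_mul_of_nonneg_right (w_le_one n) (by positivity)
    _ = x ^ n := one_mul _

lemma summable_wwx {x : ℝ} (h0 : 0 ≤ x) (h1 : x < 1) : Summable (fun n => w n ^ 2 * x ^ n) := by
  refine Summable.of_nonneg_of_le (fun n => mul_nonneg (sq_nonneg _) (pow_nonneg h0 n)) (fun n => ?_)
    (summable_geometric_of_lt_one h0 h1)
  have := w_pos n
  have := w_le_one n
  calc w n ^ 2 * x ^ n ≤ 1 * x ^ n := by
        apply mul_le_mul_of_nonneg_right _ (by positivity)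
        nlinarith
    _ = x ^ n := one_mul _

/-- The binomial series for `(1-u)^(-1/2)`. -/
lemma binom {u : ℝ} (h0 : 0 ≤ u) (h1 : u < 1) :
    (∑' n : ℕ, w n * u ^ n) = 1 / Real.sqrt (1 - u) := by
  set S := ∑' n : ℕ, w n * u ^ n with hS
  have hsum := summable_wx h0 h1
  have hnorm : Summable (fun n => ‖w n * u ^ n‖) := by
    refine hsum.congr fun n => ?_
    rw [Real.norm_eq_abs, abs_of_nonneg (mul_nonneg (w_pos n).le (pow_nonneg h0 n))]
  have hSpos : (1:ℝ) ≤ S := by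
    have := hsum.le_tsum 0 (fun j _ => mul_nonneg (w_pos j).le (pow_nonneg h0 j))
    simpa [w_zero] using this
  have hsq : S * S = (1 - u)⁻¹ := by
    rw [hS, tsum_mul_tsum_eq_tsum_sum_range_of_summable_norm hnorm hnorm]
    have : ∀ n : ℕ, (∑ k ∈ range (n + 1), w k * u ^ k * (w (n - k) * u ^ (n - k))) = u ^ n := by
      intro n
      have : ∀ k ∈ range (n + 1), w k * u ^ k * (w (n - k) * u ^ (n - k))
          = (w k * w (n - k)) * u ^ n := by
        intro k hk
        have hk' : k ≤ n := Nat.lt_succ_iff.mp (Finset.mem_range.mp hk)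
        rw [show w k * u ^ k * (w (n - k) * u ^ (n - k)) = w k * w (n-k) * (u ^ k * u ^ (n-k)) by ring,
          ← pow_add, Nat.add_sub_cancel' hk']
      rw [Finset.sum_congr rfl this, ← Finset.sum_mul, w_conv, one_mul]
    calc (∑' n : ℕ, ∑ k ∈ range (n + 1), w k * u ^ k * (w (n - k) * u ^ (n - k)))
        = ∑' n : ℕ, u ^ n := tsum_congr this
      _ = (1 - u)⁻¹ := tsum_geometric_of_lt_one h0 h1
  have h1u : (0:ℝ) < 1 - u := by linarith
  have hrhs : (1 / Real.sqrt (1 - u)) ^ 2 = (1 - u)⁻¹ := by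
    rw [div_pow, one_pow, sq_sqrt h1u.le, one_div]
  have : S ^ 2 = (1 / Real.sqrt (1 - u)) ^ 2 := by rw [sq, hsq, hrhs]
  exact (sq_eq_sq₀ (by linarith) (by positivity)).mp this




lemma G_eq (x : ℝ) : G x = ∑' n : ℕ, w n ^ 2 * x ^ n := by
  apply tsum_congr
  intro n
  have h : (n.factorial : ℝ) ≠ 0 := Nat.cast_ne_zero.2 n.factorial_ne_zero
  rw [w, div_pow]
  ring

lemma prod_eq_w (n : ℕ) : (∏ i ∈ range n, (2 * (i:ℝ) + 1) / (2 * i + 2)) = w n := by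
  induction n with
  | zero => simp [w_zero]
  | succ n ih => rw [Finset.prod_range_succ, ih, ← w_succ]

lemma wallis_Ioo (n : ℕ) :
    (∫ θ in Ioo (0:ℝ) (π/2), sin θ ^ (2 * n)) = π / 2 * w n := by
  have h2 : ∀ a b : ℝ, IntervalIntegrable (fun θ => sin θ ^ (2 * n)) volume a b :=
    fun a b => (continuous_sin.pow _).intervalIntegrable a b
  have key : (∫ θ in (0:ℝ)..(π/2), sin θ ^ (2 * n)) = π / 2 * w n := by
    have split : (∫ θ in (0:ℝ)..π, sin θ ^ (2*n))
        = (∫ θ in (0:ℝ)..(π/2), sin θ ^ (2*n)) + ∫ θ in (π/2:ℝ)..π, sin θ ^ (2*n) :=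
      (integral_add_adjacent_intervals (h2 0 (π/2)) (h2 (π/2) π)).symm
    have refl : (∫ θ in (π/2:ℝ)..π, sin θ ^ (2*n)) = ∫ θ in (0:ℝ)..(π/2), sin θ ^ (2*n) := by
      have := intervalIntegral.integral_comp_sub_left (a := 0) (b := π/2)
        (fun θ => sin θ ^ (2*n)) π
      simp only [sub_zero, Real.sin_pi_sub] at this
      rw [show π - π / 2 = π / 2 by ring] at this
      exact this.symm
    have wal : (∫ θ in (0:ℝ)..π, sin θ ^ (2*n)) = π * w n := by
      rw [integral_sin_pow_even, prod_eq_w]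
    rw [refl] at split
    rw [wal] at split
    linarith
  rw [← key, integral_of_le (by positivity), integral_Ioc_eq_integral_Ioo]

lemma G_repr {x : ℝ} (hx : x ∈ Ioo (0:ℝ) 1) :
    G x = 2 / π * ∫ θ in Ioo (0:ℝ) (π/2), 1 / Real.sqrt (1 - x * sin θ ^ 2) := by
  obtain ⟨hx0, hx1⟩ := hx
  have hpt : ∀ θ : ℝ, (1 : ℝ) / Real.sqrt (1 - x * sin θ ^ 2)
      = ∑' n : ℕ, w n * x ^ n * sin θ ^ (2 * n) := by
    intro θ
    have hu0 : 0 ≤ x * sin θ ^ 2 := mul_nonneg hx0.le (sq_nonneg _)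
    have hu1 : x * sin θ ^ 2 < 1 := by
      nlinarith [sin_sq_le_one θ, sq_nonneg (sin θ)]
    rw [← binom hu0 hu1]
    apply tsum_congr
    intro n
    rw [mul_pow, pow_mul, mul_assoc]
  have hmeas : ∀ n : ℕ, AEStronglyMeasurable
      (fun θ => w n * x ^ n * sin θ ^ (2 * n)) (volume.restrict (Ioo (0:ℝ) (π/2))) :=
    fun n => ((continuous_const.mul (continuous_sin.pow _))).aestronglyMeasurable
  have hbound : ∀ n : ℕ, ∀ θ : ℝ, ‖w n * x ^ n * sin θ ^ (2 * n)‖ ≤ w n * x ^ n := by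
    intro n θ
    rw [Real.norm_eq_abs, abs_mul, abs_of_nonneg (mul_nonneg (w_pos n).le (pow_nonneg hx0.le n))]
    have h1 : |sin θ ^ (2*n)| ≤ 1 := by
      rw [abs_pow]
      exact pow_le_one₀ (abs_nonneg _) (abs_sin_le_one θ)
    nlinarith [mul_nonneg (w_pos n).le (pow_nonneg hx0.le n), abs_nonneg (sin θ ^ (2*n))]
  have hsum : Summable (fun n => w n * x ^ n) := by
    refine Summable.of_nonneg_of_le (fun n => mul_nonneg (w_pos n).le (pow_nonneg hx0.le n))
      (fun n => ?_) (summable_geometric_of_lt_one hx0.le hx1)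
    calc w n * x ^ n ≤ 1 * x ^ n :=
        mul_le_mul_of_nonneg_right (w_le_one n) (pow_nonneg hx0.le n)
      _ = x ^ n := one_mul _
  have hlint : (∑' n : ℕ, ∫⁻ θ in Ioo (0:ℝ) (π/2), ‖w n * x ^ n * sin θ ^ (2 * n)‖₊) ≠ ⊤ := by
    have hle : ∀ n : ℕ, (∫⁻ θ in Ioo (0:ℝ) (π/2), ‖w n * x ^ n * sin θ ^ (2 * n)‖₊)
        ≤ ENNReal.ofReal (w n * x ^ n * (π/2)) := by
      intro n
      calc (∫⁻ θ in Ioo (0:ℝ) (π/2), ‖w n * x ^ n * sin θ ^ (2 * n)‖₊)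
          ≤ ∫⁻ _ in Ioo (0:ℝ) (π/2), ENNReal.ofReal (w n * x ^ n) := by
            apply lintegral_mono
            intro θ
            simp only [← enorm_eq_nnnorm, ← ofReal_norm]
            exact ENNReal.ofReal_le_ofReal (hbound n θ)
        _ = ENNReal.ofReal (w n * x ^ n) * volume (Ioo (0:ℝ) (π/2)) := by
            rw [lintegral_const, Measure.restrict_apply MeasurableSet.univ, Set.univ_inter]
        _ = ENNReal.ofReal (w n * x ^ n * (π/2)) := by
            rw [Real.volume_Ioo, sub_zero, ← ENNReal.ofReal_mul
              (mul_nonneg (w_pos n).le (pow_nonneg hx0.le n))]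
    refine ne_top_of_le_ne_top ?_ (ENNReal.tsum_le_tsum hle)
    rw [← ENNReal.ofReal_tsum_of_nonneg
      (fun n => mul_nonneg (mul_nonneg (w_pos n).le (pow_nonneg hx0.le n)) (by positivity))
      (by exact (hsum.mul_right _))]
    exact ENNReal.ofReal_ne_top
  have swap := MeasureTheory.integral_tsum hmeas hlint
  have hterm : ∀ n : ℕ, (∫ θ in Ioo (0:ℝ) (π/2), w n * x ^ n * sin θ ^ (2 * n))
      = w n ^ 2 * x ^ n * (π/2) := by
    intro n
    rw [MeasureTheory.integral_const_mul, wallis_Ioo n]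
    ring
  have : (∫ θ in Ioo (0:ℝ) (π/2), 1 / Real.sqrt (1 - x * sin θ ^ 2))
      = ∑' n : ℕ, w n ^ 2 * x ^ n * (π/2) := by
    rw [show (fun θ => 1 / Real.sqrt (1 - x * sin θ ^ 2))
        = fun θ => ∑' n : ℕ, w n * x ^ n * sin θ ^ (2 * n) from funext hpt]
    rw [swap]
    exact tsum_congr hterm
  rw [this, tsum_mul_right, G_eq]
  have hπ : π ≠ 0 := pi_ne_zero
  field_simp



/-- Substitution for an integral over a finite interval mapping onto `Ioi 0`. -/
lemma subst_Ico {c : ℝ} (hc : 0 < c) {f f' g : ℝ → ℝ}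
    (hf : ContinuousOn f (Ico 0 c))
    (hft : Tendsto f (nhdsWithin c (Iio c)) atTop)
    (hff' : ∀ x ∈ Ioo 0 c, HasDerivAt f (f' x) x)
    (hg : Continuous g) (hgi : Integrable g)
    (hfgi : IntegrableOn (fun x => f' x * g (f x)) (Ioo 0 c))
    (hf0 : f 0 = 0) :
    ∫ x in Ioo 0 c, f' x * g (f x) = ∫ u in Ioi (0:ℝ), g u := by
  set b : ℕ → ℝ := fun n => c - c / (n + 2) with hbdef
  have hb_mem : ∀ n : ℕ, b n ∈ Ioo 0 c := by
    intro n
    constructor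
    · have h1 : c / (n + 2) < c := by
        rw [div_lt_iff₀ (by positivity)]
        nlinarith [Nat.cast_nonneg (α := ℝ) n]
      simpa [hbdef] using sub_pos.mpr h1
    · have : 0 < c / ((n:ℝ) + 2) := by positivity
      simp only [hbdef]; linarith
  have hb_mono : Monotone b := by
    intro m n hmn
    have : c / ((n:ℝ) + 2) ≤ c / ((m:ℝ) + 2) := by
      apply div_le_div_of_nonneg_left hc.le (by positivity)
      exact_mod_cast by omega
    simp only [hbdef]; linarith
  have hb_lim : Tendsto b atTop (nhds c) := by
    have h1 : Tendsto (fun n : ℕ => ((n:ℝ) + 2)) atTop atTop :=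
      tendsto_atTop_add_const_right _ _ tendsto_natCast_atTop_atTop
    have h2 : Tendsto (fun n : ℕ => c / ((n:ℝ) + 2)) atTop (nhds 0) :=
      h1.const_div_atTop c
    have := tendsto_const_nhds (x := c) (f := atTop (α := ℕ)) |>.sub h2
    simpa using this
  have hb_limW : Tendsto b atTop (nhdsWithin c (Iio c)) :=
    tendsto_nhdsWithin_of_tendsto_nhds_of_eventually_within _ hb_lim
      (Eventually.of_forall fun n => (hb_mem n).2)
  have hunion : (⋃ n : ℕ, Ioc (0:ℝ) (b n)) = Ioo 0 c := by
    ext t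
    simp only [Set.mem_iUnion, Set.mem_Ioc, Set.mem_Ioo]
    constructor
    · rintro ⟨n, h1, h2⟩
      exact ⟨h1, lt_of_le_of_lt h2 (hb_mem n).2⟩
    · rintro ⟨h1, h2⟩
      obtain ⟨n, hn⟩ := (hb_lim.eventually_const_le h2).exists
      exact ⟨n, h1, hn⟩
  have lhs_tendsto : Tendsto (fun n : ℕ => ∫ x in Ioc 0 (b n), f' x * g (f x)) atTop
      (nhds (∫ x in Ioo 0 c, f' x * g (f x))) := by
    have := tendsto_setIntegral_of_monotone (f := fun x => f' x * g (f x))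
      (s := fun n : ℕ => Ioc (0:ℝ) (b n)) (fun n => measurableSet_Ioc)
      (fun m n hmn => Ioc_subset_Ioc_right (hb_mono hmn))
      (by rw [hunion]; exact hfgi)
    rwa [hunion] at this
  have eqn : ∀ n : ℕ, (∫ x in Ioc 0 (b n), f' x * g (f x)) = ∫ u in (0:ℝ)..(f (b n)), g u := by
    intro n
    have hbn := hb_mem n
    have h1 : (∫ x in Ioc 0 (b n), f' x * g (f x)) = ∫ x in (0:ℝ)..(b n), f' x * g (f x) := by
      rw [integral_of_le hbn.1.le]
    rw [h1]
    have key := intervalIntegral.integral_comp_smul_deriv''' (f := f) (f' := f') (g := g)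
      (a := 0) (b := b n)
      (hf.mono (by rw [uIcc_of_le hbn.1.le]; exact Icc_subset_Ico_right hbn.2))
      (fun x hx => by
        have hx' : x ∈ Ioo 0 c := by
          rw [min_eq_left hbn.1.le, max_eq_right hbn.1.le] at hx
          exact ⟨hx.1, hx.2.trans hbn.2⟩
        exact (hff' x hx').hasDerivWithinAt)
      (hg.continuousOn) (hgi.integrableOn)
      (by
        rw [uIcc_of_le hbn.1.le, integrableOn_Icc_iff_integrableOn_Ioo]
        exact hfgi.mono_set (Ioo_subset_Ioo_right hbn.2.le))
    simp only [smul_eq_mul, Function.comp_def] at key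
    rw [key, hf0]
  have rhs_tendsto : Tendsto (fun n : ℕ => ∫ u in (0:ℝ)..(f (b n)), g u) atTop
      (nhds (∫ u in Ioi (0:ℝ), g u)) :=
    intervalIntegral_tendsto_integral_Ioi 0 hgi.integrableOn (hft.comp hb_limW)
  have := lhs_tendsto.congr (fun n => eqn n)
  exact tendsto_nhds_unique this rhs_tendsto

/-- Substitution for an integral over `Ioi 0` mapping onto all of `ℝ`. -/
lemma subst_Ioi {f f' g : ℝ → ℝ}
    (hf : ContinuousOn f (Ioi 0))
    (hbot : Tendsto f (nhdsWithin 0 (Ioi 0)) atBot) (htop : Tendsto f atTop atTop)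
    (hff' : ∀ x ∈ Ioi (0:ℝ), HasDerivAt f (f' x) x)
    (hg : Continuous g) (hgi : Integrable g)
    (hfgi : IntegrableOn (fun x => f' x * g (f x)) (Ioi 0)) :
    ∫ x in Ioi (0:ℝ), f' x * g (f x) = ∫ u, g u := by
  set a : ℕ → ℝ := fun n => 1 / (n + 1) with hadef
  set b : ℕ → ℝ := fun n => n + 1 with hbdef
  have ha_pos : ∀ n : ℕ, 0 < a n := fun n => by positivity
  have hab : ∀ n : ℕ, a n ≤ b n := by
    intro n
    have h1 : (1:ℝ) / (n + 1) ≤ 1 := by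
      rw [div_le_one (by positivity)]; linarith [Nat.cast_nonneg (α := ℝ) n]
    have : (1:ℝ) ≤ (n:ℝ) + 1 := by linarith [Nat.cast_nonneg (α := ℝ) n]
    simp only [hadef, hbdef]; linarith
  have ha_anti : ∀ m n : ℕ, m ≤ n → a n ≤ a m := by
    intro m n hmn
    apply div_le_div_of_nonneg_left zero_le_one (by positivity)
    exact_mod_cast by omega
  have hb_mono : ∀ m n : ℕ, m ≤ n → b m ≤ b n := by
    intro m n hmn; simp only [hbdef]; exact_mod_cast by omega
  have ha_lim : Tendsto a atTop (nhdsWithin 0 (Ioi 0)) := by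
    apply tendsto_nhdsWithin_of_tendsto_nhds_of_eventually_within _ ?_
      (Eventually.of_forall fun n => ha_pos n)
    have h1 : Tendsto (fun n : ℕ => ((n:ℝ) + 1)) atTop atTop :=
      tendsto_atTop_add_const_right _ _ tendsto_natCast_atTop_atTop
    exact h1.const_div_atTop 1
  have hb_lim : Tendsto b atTop atTop :=
    tendsto_atTop_add_const_right _ _ tendsto_natCast_atTop_atTop
  have hmono : Monotone (fun n : ℕ => Ioc (a n) (b n)) := by
    intro m n hmn
    exact Ioc_subset_Ioc (ha_anti m n hmn) (hb_mono m n hmn)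
  have hunion : (⋃ n : ℕ, Ioc (a n) (b n)) = Ioi (0:ℝ) := by
    ext t
    simp only [Set.mem_iUnion, Set.mem_Ioc, Set.mem_Ioi]
    constructor
    · rintro ⟨n, h1, _⟩
      exact (ha_pos n).trans h1
    · intro ht
      obtain ⟨n, hn⟩ := ((ha_lim.mono_right nhdsWithin_le_nhds).eventually_lt_const ht).exists
      obtain ⟨m, hm⟩ := (hb_lim.eventually_ge_atTop t).exists
      refine ⟨max n m, lt_of_le_of_lt (ha_anti n (max n m) (le_max_left _ _)) hn,
        le_trans hm (hb_mono m (max n m) (le_max_right _ _))⟩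
  have lhs_tendsto : Tendsto (fun n : ℕ => ∫ x in Ioc (a n) (b n), f' x * g (f x)) atTop
      (nhds (∫ x in Ioi (0:ℝ), f' x * g (f x))) := by
    have := tendsto_setIntegral_of_monotone (f := fun x => f' x * g (f x))
      (s := fun n : ℕ => Ioc (a n) (b n)) (fun n => measurableSet_Ioc) hmono
      (by rw [hunion]; exact hfgi)
    rwa [hunion] at this
  have eqn : ∀ n : ℕ, (∫ x in Ioc (a n) (b n), f' x * g (f x))
      = ∫ u in (f (a n))..(f (b n)), g u := by
    intro n
    have h1 : (∫ x in Ioc (a n) (b n), f' x * g (f x))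
        = ∫ x in (a n)..(b n), f' x * g (f x) := by
      rw [integral_of_le (hab n)]
    rw [h1]
    have hIcc : Icc (a n) (b n) ⊆ Ioi 0 := fun x hx => lt_of_lt_of_le (ha_pos n) hx.1
    have key := intervalIntegral.integral_comp_smul_deriv''' (f := f) (f' := f') (g := g)
      (a := a n) (b := b n)
      (hf.mono (by rw [uIcc_of_le (hab n)]; exact hIcc))
      (fun x hx => by
        have hx' : x ∈ Ioi (0:ℝ) := by
          rw [min_eq_left (hab n), max_eq_right (hab n)] at hx
          exact (ha_pos n).trans hx.1
        exact (hff' x hx').hasDerivWithinAt)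
      (hg.continuousOn) (hgi.integrableOn)
      (by
        rw [uIcc_of_le (hab n)]
        exact hfgi.mono_set hIcc)
    simp only [smul_eq_mul, Function.comp_def] at key
    rw [key]
  have rhs_tendsto : Tendsto (fun n : ℕ => ∫ u in (f (a n))..(f (b n)), g u) atTop
      (nhds (∫ u, g u)) :=
    intervalIntegral_tendsto_integral hgi (hbot.comp ha_lim) (htop.comp hb_lim)
  exact tendsto_nhds_unique (lhs_tendsto.congr (fun n => eqn n)) rhs_tendsto

lemma even_integral {g : ℝ → ℝ} (hgi : Integrable g) (heven : ∀ u, g (-u) = g u) :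
    ∫ u, g u = 2 * ∫ u in Ioi (0:ℝ), g u := by
  have h1 := integral_Iic_add_Ioi (b := (0:ℝ))
    hgi.integrableOn hgi.integrableOn
  have h2 : (∫ u in Iic (0:ℝ), g u) = ∫ u in Ioi (0:ℝ), g u := by
    rw [← neg_zero, ← integral_comp_neg_Ioi]
    simp only [heven, neg_zero]
  linarith [h1, h2]



noncomputable def Ii (a b : ℝ) : ℝ :=
  ∫ t in Ioi (0:ℝ), 1 / Real.sqrt ((t^2 + a^2) * (t^2 + b^2))

section IiBasic

variable {a b : ℝ}

lemma Ii_cont (ha : 0 < a) (hb : 0 < b) :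
    Continuous (fun t : ℝ => 1 / Real.sqrt ((t^2 + a^2) * (t^2 + b^2))) := by
  apply continuous_const.div
  · exact (((continuous_pow 2).add continuous_const).mul
      ((continuous_pow 2).add continuous_const)).sqrt
  · intro t
    have h : (0:ℝ) < (t^2 + a^2) * (t^2 + b^2) := by positivity
    positivity

lemma Ii_integrable (ha : 0 < a) (hb : 0 < b) :
    Integrable (fun t : ℝ => 1 / Real.sqrt ((t^2 + a^2) * (t^2 + b^2))) := by
  set m := min a b with hm
  have hm0 : 0 < m := lt_min ha hb
  have hdom : Integrable (fun t : ℝ => m⁻¹ * m⁻¹ * (1 + (t/m)^2)⁻¹) :=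
    (integrable_inv_one_add_sq.comp_div hm0.ne').const_mul _
  apply hdom.mono ((Ii_cont ha hb).aestronglyMeasurable)
  apply ae_of_all
  intro t
  have hma : m ≤ a := min_le_left _ _
  have hmb : m ≤ b := min_le_right _ _
  have hma2 : m^2 ≤ a^2 := by nlinarith
  have hmb2 : m^2 ≤ b^2 := by nlinarith
  have hab2 : m^2 * m^2 ≤ a^2 * b^2 :=
    mul_le_mul hma2 hmb2 (sq_nonneg m) (sq_nonneg a)
  have h1 : (t^2 + m^2)^2 ≤ (t^2 + a^2) * (t^2 + b^2) := by nlinarith [sq_nonneg t]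
  have h2 : (t^2 + m^2) ≤ Real.sqrt ((t^2 + a^2) * (t^2 + b^2)) := by
    rw [show t^2 + m^2 = Real.sqrt ((t^2+m^2)^2) from (Real.sqrt_sq (by positivity)).symm]
    exact Real.sqrt_le_sqrt h1
  have hP : (0:ℝ) < (t^2 + a^2) * (t^2 + b^2) := by positivity
  have hs : (0:ℝ) < Real.sqrt ((t^2 + a^2) * (t^2 + b^2)) := Real.sqrt_pos.mpr hP
  have key : m⁻¹ * m⁻¹ * (1 + (t/m)^2)⁻¹ = (t^2 + m^2)⁻¹ := by
    rw [← mul_inv, ← mul_inv]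
    congr 1
    field_simp
    ring
  rw [Real.norm_eq_abs, Real.norm_eq_abs, abs_of_nonneg (by positivity),
    abs_of_nonneg (by positivity), key, one_div]
  exact inv_anti₀ (by positivity) h2

lemma D_pos (ha : 0 < a) (hb : 0 < b) (θ : ℝ) :
    0 < a^2 * cos θ^2 + b^2 * sin θ^2 := by
  have h := sin_sq_add_cos_sq θ
  rcases le_or_gt (cos θ^2) (1/2) with hc | hc
  · have hsin : 1/2 ≤ sin θ^2 := by nlinarith
    nlinarith [sq_nonneg (cos θ), sq_nonneg a, mul_pos hb hb]
  · nlinarith [sq_nonneg (sin θ), mul_pos ha ha, mul_pos hb hb]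

lemma D_cont (ha : 0 < a) (hb : 0 < b) :
    Continuous (fun θ : ℝ => 1 / Real.sqrt (a^2 * cos θ^2 + b^2 * sin θ^2)) := by
  apply continuous_const.div
  · exact ((continuous_const.mul (continuous_cos.pow 2)).add
      (continuous_const.mul (continuous_sin.pow 2))).sqrt
  · intro θ
    exact (Real.sqrt_pos.mpr (D_pos ha hb θ)).ne'

/-- The tangent-substitution link between the trigonometric and algebraic forms. -/
lemma tan_link (ha : 0 < a) (hb : 0 < b) :
    (∫ θ in Ioo (0:ℝ) (π/2), 1 / Real.sqrt (a^2 * cos θ^2 + b^2 * sin θ^2)) = Ii a b := by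
  have hsub : Ico (0:ℝ) (π/2) ⊆ {x | cos x ≠ 0} := by
    intro θ hθ
    have : 0 < cos θ := Real.cos_pos_of_mem_Ioo ⟨by linarith [hθ.1, pi_pos], hθ.2⟩
    exact this.ne'
  have hpoint : ∀ θ ∈ Ioo (0:ℝ) (π/2),
      (b * (1 / cos θ^2)) * (1 / Real.sqrt (((b * tan θ)^2 + a^2) * ((b * tan θ)^2 + b^2)))
      = 1 / Real.sqrt (a^2 * cos θ^2 + b^2 * sin θ^2) := by
    intro θ hθ
    have hcos : 0 < cos θ := Real.cos_pos_of_mem_Ioo ⟨by linarith [hθ.1, pi_pos], hθ.2⟩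
    have hD : 0 < a^2 * cos θ^2 + b^2 * sin θ^2 := D_pos ha hb θ
    have hs2 : sin θ ^ 2 = 1 - cos θ ^ 2 := by
      have := sin_sq_add_cos_sq θ; linarith
    have key : ((b * tan θ)^2 + a^2) * ((b * tan θ)^2 + b^2)
        = (b / cos θ^2)^2 * (a^2 * cos θ^2 + b^2 * sin θ^2) := by
      rw [Real.tan_eq_sin_div_cos, mul_pow, div_pow, hs2]
      field_simp
      ring
    rw [key, Real.sqrt_mul (sq_nonneg _), Real.sqrt_sq (by positivity)]
    have hsD : 0 < Real.sqrt (a^2 * cos θ^2 + b^2 * sin θ^2) := Real.sqrt_pos.mpr hD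
    field_simp
  have lhs_eq : (∫ θ in Ioo (0:ℝ) (π/2), 1 / Real.sqrt (a^2 * cos θ^2 + b^2 * sin θ^2))
      = ∫ θ in Ioo (0:ℝ) (π/2), (b * (1 / cos θ^2)) *
          (1 / Real.sqrt (((b * tan θ)^2 + a^2) * ((b * tan θ)^2 + b^2))) := by
    apply setIntegral_congr_fun measurableSet_Ioo
    intro θ hθ
    exact (hpoint θ hθ).symm
  rw [lhs_eq]
  exact subst_Ico pi_div_two_pos
    (continuousOn_const.mul (Real.continuousOn_tan.mono hsub))
    ((Real.tendsto_tan_pi_div_two).const_mul_atTop hb)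
    (fun θ hθ => (Real.hasDerivAt_tan (hsub ⟨hθ.1.le, hθ.2⟩)).const_mul b)
    (Ii_cont ha hb) (Ii_integrable ha hb)
    (by
      apply IntegrableOn.congr_fun _ (fun θ hθ => (hpoint θ hθ).symm) measurableSet_Ioo
      exact ((D_cont ha hb).integrableOn_Icc (a := 0) (b := π/2)).mono_set Ioo_subset_Icc_self)
    (by simp [Real.tan_zero])

/-- Gauss's AGM invariance. -/
lemma gauss_agm (ha : 0 < a) (hb : 0 < b) :
    Ii a b = Ii ((a + b)/2) (Real.sqrt (a * b)) := by
  set A := (a + b)/2 with hA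
  set B := Real.sqrt (a * b) with hB
  have hApos : 0 < A := by rw [hA]; linarith
  have hBpos : 0 < B := Real.sqrt_pos.mpr (mul_pos ha hb)
  have hB2 : B^2 = a * b := Real.sq_sqrt (mul_pos ha hb).le
  set g : ℝ → ℝ := fun u => 1 / Real.sqrt ((u^2 + A^2) * (u^2 + B^2)) with hg
  set f : ℝ → ℝ := fun t => (t - a*b*t⁻¹)/2 with hf
  set f' : ℝ → ℝ := fun t => (1 + a*b/t^2)/2 with hf'
  have hpoint : ∀ t ∈ Ioi (0:ℝ), f' t * g (f t)
      = 2 * (1 / Real.sqrt ((t^2 + a^2) * (t^2 + b^2))) := by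
    intro t ht
    have ht : (0:ℝ) < t := ht
    have hP : (0:ℝ) < (t^2 + a^2) * (t^2 + b^2) := by positivity
    have hsP : 0 < Real.sqrt ((t^2 + a^2) * (t^2 + b^2)) := Real.sqrt_pos.mpr hP
    have key : ((f t)^2 + A^2) * ((f t)^2 + B^2)
        = (Real.sqrt ((t^2 + a^2) * (t^2 + b^2)) * ((t^2 + a*b)/(4*t^2)))^2 := by
      rw [mul_pow, Real.sq_sqrt hP.le]
      simp only [hf, hA, hB2]
      field_simp
      ring
    have hnn : 0 ≤ Real.sqrt ((t^2 + a^2) * (t^2 + b^2)) * ((t^2 + a*b)/(4*t^2)) := by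
      positivity
    simp only [hg, hf']
    rw [key, Real.sqrt_sq hnn]
    have h2 : (0:ℝ) < t^2 + a*b := by positivity
    field_simp
    ring
  have hfcont : ContinuousOn f (Ioi (0:ℝ)) := by
    apply ContinuousOn.div_const
    apply continuousOn_id.sub
    exact continuousOn_const.mul (continuousOn_id.inv₀ (fun x hx => ne_of_gt hx))
  have hbot : Tendsto f (nhdsWithin 0 (Ioi 0)) atBot := by
    have h1 : Tendsto (fun t : ℝ => a*b*t⁻¹) (nhdsWithin 0 (Ioi 0)) atTop :=
      tendsto_inv_nhdsGT_zero.const_mul_atTop (mul_pos ha hb)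
    have h2 : Tendsto (fun t : ℝ => t + -(a*b*t⁻¹)) (nhdsWithin 0 (Ioi 0)) atBot := by
      apply Filter.tendsto_atBot_add_left_of_ge' _ 1 ?_ (tendsto_neg_atTop_atBot.comp h1)
      exact ((eventually_lt_nhds (by norm_num : (0:ℝ) < 1)).mono fun t ht => ht.le).filter_mono
        nhdsWithin_le_nhds
    have h3 := h2.atBot_div_const (by norm_num : (0:ℝ) < 2)
    apply h3.congr
    intro t
    simp only [hf]; ring
  have htop : Tendsto f atTop atTop := by
    have h1 : Tendsto (fun t : ℝ => -(a*b*t⁻¹)) atTop (nhds 0) := by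
      have := (tendsto_inv_atTop_zero (𝕜 := ℝ)).const_mul (a*b)
      simpa using this.neg
    have h2 : Tendsto (fun t : ℝ => t + -(a*b*t⁻¹)) atTop atTop := by
      apply Filter.tendsto_atTop_add_right_of_le' _ (-1) tendsto_id
      exact h1.eventually_const_le (by norm_num)
    have h3 := h2.atTop_div_const (by norm_num : (0:ℝ) < 2)
    apply h3.congr
    intro t
    simp only [hf]; ring
  have hff' : ∀ t ∈ Ioi (0:ℝ), HasDerivAt f (f' t) t := by
    intro t ht
    have ht : (0:ℝ) < t := ht
    have h1 : HasDerivAt (fun s : ℝ => s⁻¹) (-(t^2)⁻¹) t := by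
      simpa using hasDerivAt_inv (ne_of_gt ht)
    have h2 := h1.const_mul (a*b)
    have h3 := ((hasDerivAt_id t).sub h2).div_const 2
    have hval : (1 - a*b*(-(t^2)⁻¹))/2 = f' t := by
      simp only [hf']
      field_simp
      ring
    rw [← hval]
    exact h3
  have hfgi : IntegrableOn (fun t => f' t * g (f t)) (Ioi (0:ℝ)) := by
    have hI : IntegrableOn (fun t : ℝ => 2 * (1 / Real.sqrt ((t^2 + a^2) * (t^2 + b^2))))
        (Ioi (0:ℝ)) := ((Ii_integrable ha hb).const_mul 2).integrableOn
    exact hI.congr_fun (fun t ht => (hpoint t ht).symm) measurableSet_Ioi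
  have step := subst_Ioi hfcont hbot htop hff' (Ii_cont hApos hBpos)
    (Ii_integrable hApos hBpos) hfgi
  have lhs_eq : (∫ t in Ioi (0:ℝ), f' t * g (f t)) = 2 * Ii a b := by
    rw [setIntegral_congr_fun measurableSet_Ioi hpoint, MeasureTheory.integral_const_mul, Ii]
  have rhs_eq : (∫ u, g u) = 2 * Ii A B := by
    rw [even_integral (Ii_integrable hApos hBpos) (fun u => by simp [hg, neg_sq]), Ii]
  rw [lhs_eq, rhs_eq] at step
  linarith

/-- Scaling. -/
lemma Ii_smul {c : ℝ} (hc : 0 < c) (a b : ℝ) : Ii (c*a) (c*b) = Ii a b / c := by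
  have key := MeasureTheory.integral_comp_mul_left_Ioi
    (fun t : ℝ => 1 / Real.sqrt ((t^2 + (c*a)^2) * (t^2 + (c*b)^2))) 0 hc
  have hpt : ∀ x : ℝ, (1 : ℝ) / Real.sqrt (((c*x)^2 + (c*a)^2) * ((c*x)^2 + (c*b)^2))
      = (c^2)⁻¹ * (1 / Real.sqrt ((x^2 + a^2) * (x^2 + b^2))) := by
    intro x
    have h1 : ((c*x)^2 + (c*a)^2) * ((c*x)^2 + (c*b)^2)
        = (c^2)^2 * ((x^2 + a^2) * (x^2 + b^2)) := by ring
    rw [h1, Real.sqrt_mul (by positivity), Real.sqrt_sq (by positivity)]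
    rw [one_div, mul_inv, one_div]
  have lhs_eq : (∫ x in Ioi (0:ℝ),
      (1:ℝ) / Real.sqrt (((c*x)^2 + (c*a)^2) * ((c*x)^2 + (c*b)^2)))
      = (c^2)⁻¹ * Ii a b := by
    rw [show (fun x : ℝ => (1:ℝ) / Real.sqrt (((c*x)^2 + (c*a)^2) * ((c*x)^2 + (c*b)^2)))
      = fun x : ℝ => (c^2)⁻¹ * (1 / Real.sqrt ((x^2 + a^2) * (x^2 + b^2))) from funext hpt,
      MeasureTheory.integral_const_mul, Ii]
  rw [mul_zero] at key
  rw [lhs_eq, smul_eq_mul] at key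
  have hIi : (∫ x in Ioi (0:ℝ),
      (fun t : ℝ => 1 / Real.sqrt ((t^2 + (c*a)^2) * (t^2 + (c*b)^2))) x) = Ii (c*a) (c*b) := rfl
  rw [hIi] at key
  have hc2 : (c:ℝ) ≠ 0 := hc.ne'
  have h2 : Ii (c*a) (c*b) = c * ((c^2)⁻¹ * Ii a b) := by
    rw [key]
    field_simp
  rw [h2]
  field_simp

end IiBasic



-- === new material ===

set_option maxHeartbeats 1000000 in
lemma G_eq_Ii {x : ℝ} (hx : x ∈ Ioo (0:ℝ) 1) :
    G x = 2 / π * Ii 1 (Real.sqrt (1 - x)) := by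
  have hb : 0 < Real.sqrt (1 - x) := Real.sqrt_pos.mpr (by linarith [hx.2])
  rw [G_repr hx, ← tan_link one_pos hb]
  congr 1
  apply setIntegral_congr_fun measurableSet_Ioo
  intro θ _
  show (1:ℝ) / Real.sqrt (1 - x * sin θ ^ 2)
      = 1 / Real.sqrt (1^2 * cos θ^2 + Real.sqrt (1-x)^2 * sin θ^2)
  have h1 : Real.sqrt (1 - x) ^ 2 = 1 - x := Real.sq_sqrt (by linarith [hx.2])
  have h2 := sin_sq_add_cos_sq θ
  have h3 : 1 - x * sin θ ^ 2 = 1^2 * cos θ^2 + Real.sqrt (1-x)^2 * sin θ^2 := by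
    rw [h1]; nlinarith [h2]
  rw [h3]

lemma G_pos {x : ℝ} (h0 : 0 ≤ x) (h1 : x < 1) : 0 < G x := by
  rw [G_eq]
  have hsum := summable_wwx h0 h1
  have hle := hsum.le_tsum 0 (fun j _ => mul_nonneg (sq_nonneg _) (pow_nonneg h0 j))
  have : (0:ℝ) < w 0 ^ 2 * x ^ 0 := by rw [w_zero]; norm_num
  linarith

lemma G_strictMono {x y : ℝ} (h0 : 0 ≤ x) (hxy : x < y) (h1 : y < 1) : G x < G y := by
  rw [G_eq, G_eq]
  apply Summable.tsum_lt_tsum_of_nonneg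
  · intro n
    exact mul_nonneg (sq_nonneg _) (pow_nonneg h0 n)
  · intro n
    exact mul_le_mul_of_nonneg_left (pow_le_pow_left₀ h0 hxy.le n) (sq_nonneg _)
  · show w 1 ^ 2 * x ^ 1 < w 1 ^ 2 * y ^ 1
    have hw1 : w 1 = 1/2 := by
      have := w_succ 0
      rw [w_zero] at this
      norm_num at this
      exact this
    rw [hw1, pow_one, pow_one]
    norm_num
    linarith
  · exact summable_wwx (by linarith) h1

/-- The modular ratio function is injective on `(0,1)`. -/
lemma ratio_injOn : InjOn (fun b => G (1 - b) / G b) (Ioo (0:ℝ) 1) := by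
  have hanti : StrictAntiOn (fun b => G (1 - b) / G b) (Ioo (0:ℝ) 1) := by
    intro b1 hb1 b2 hb2 h12
    have hG1 : 0 < G b1 := G_pos hb1.1.le hb1.2
    have hG2 : 0 < G b2 := G_pos hb2.1.le hb2.2
    have hN2 : 0 < G (1 - b2) := G_pos (by linarith [hb2.2]) (by linarith [hb2.1])
    have hnum : G (1 - b2) < G (1 - b1) :=
      G_strictMono (by linarith [hb2.2]) (by linarith) (by linarith [hb1.1])
    have hden : G b1 < G b2 := G_strictMono hb1.1.le h12 hb2.2
    calc G (1 - b2) / G b2 < G (1 - b1) / G b2 := by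
          exact div_lt_div_of_pos_right hnum hG2 -- maybe wrong name
      _ ≤ G (1 - b1) / G b1 := by
          apply div_le_div_of_nonneg_left (by linarith) hG1 hden.le
  exact hanti.injOn

theorem classical_modular_equation_deg2 (α β : ℝ) (hα : α ∈ Set.Ioo (0:ℝ) 1)
    (hβ : β ∈ Set.Ioo (0:ℝ) 1)
    (h : G (1 - β) / G β = 2 * (G (1 - α) / G α)) :
    β = ((1 - Real.sqrt (1 - α)) / (1 + Real.sqrt (1 - α)))^2 := by
  set k' := Real.sqrt (1 - α) with hk'
  have hk'0 : 0 < k' := Real.sqrt_pos.mpr (by linarith [hα.2])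
  have hk'1 : k' < 1 := by
    have h1 : Real.sqrt (1 - α) < Real.sqrt 1 :=
      Real.sqrt_lt_sqrt (by linarith [hα.2]) (by linarith [hα.1])
    rwa [Real.sqrt_one] at h1
  have hk'sq : k' ^ 2 = 1 - α := Real.sq_sqrt (by linarith [hα.2])
  set β₀ := ((1 - k')/(1 + k'))^2 with hβ₀def
  have hr0 : 0 < (1 - k')/(1 + k') := div_pos (by linarith) (by linarith)
  have hr1 : (1 - k')/(1 + k') < 1 := by
    rw [div_lt_one (by linarith)]; linarith
  have hβ₀mem : β₀ ∈ Ioo (0:ℝ) 1 :=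
    ⟨pow_pos hr0 2, pow_lt_one₀ hr0.le hr1 two_ne_zero⟩
  have hsq1 : Real.sqrt (1 - β₀) = 2 * Real.sqrt k' / (1 + k') := by
    have hs : Real.sqrt k' ^ 2 = k' := Real.sq_sqrt hk'0.le
    have h5 : (2 * Real.sqrt k' / (1 + k'))^2 = 4 * k' / (1 + k')^2 := by
      rw [div_pow, mul_pow, hs]; ring_nf
    have h4 : 1 - β₀ = (2 * Real.sqrt k' / (1 + k'))^2 := by
      rw [h5, hβ₀def, div_pow]
      field_simp
      ring
    rw [h4, Real.sqrt_sq (by positivity)]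
  have val1 : G β₀ = (1 + k')/2 * G α := by
    rw [G_eq_Ii hβ₀mem, hsq1]
    have hgauss := gauss_agm one_pos hk'0
    rw [one_mul] at hgauss
    have hscale := Ii_smul (show (0:ℝ) < 2/(1+k') by positivity) ((1+k')/2) (Real.sqrt k')
    have e1 : 2/(1+k') * ((1+k')/2) = 1 := by field_simp
    have e2 : 2/(1+k') * Real.sqrt k' = 2 * Real.sqrt k' / (1+k') := by ring
    rw [e1, e2] at hscale
    rw [hscale, ← hgauss, G_eq_Ii hα, ← hk']
    have hπ : (0:ℝ) < π := pi_pos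
    field_simp
  have val2 : G (1 - β₀) = (1 + k') * G (1 - α) := by
    have hmem : 1 - β₀ ∈ Ioo (0:ℝ) 1 := ⟨by linarith [hβ₀mem.2], by linarith [hβ₀mem.1]⟩
    have hmem' : 1 - α ∈ Ioo (0:ℝ) 1 := ⟨by linarith [hα.2], by linarith [hα.1]⟩
    rw [G_eq_Ii hmem, show (1:ℝ) - (1 - β₀) = β₀ by ring]
    have hsqβ : Real.sqrt β₀ = (1 - k')/(1 + k') := by
      rw [hβ₀def, Real.sqrt_sq hr0.le]
    rw [hsqβ]
    have hgauss := gauss_agm one_pos hr0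
    rw [one_mul] at hgauss
    have e3 : (1 + (1 - k')/(1 + k'))/2 = 1/(1 + k') := by
      field_simp
      ring
    rw [e3] at hgauss
    have hscale := Ii_smul (show (0:ℝ) < 1 + k' by linarith) (1/(1+k'))
      (Real.sqrt ((1 - k')/(1 + k')))
    have e4 : (1 + k') * (1/(1+k')) = 1 := by field_simp
    have e5 : (1 + k') * Real.sqrt ((1 - k')/(1 + k')) = Real.sqrt α := by
      have h7 : ((1 + k') * Real.sqrt ((1 - k')/(1 + k')))^2 = α := by
        rw [mul_pow, Real.sq_sqrt hr0.le]
        field_simp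
        nlinarith [hk'sq]
      rw [← h7, Real.sqrt_sq (by positivity)]
    rw [e4, e5] at hscale
    have h8 : Ii (1/(1+k')) (Real.sqrt ((1 - k')/(1 + k')))
        = (1 + k') * Ii 1 (Real.sqrt α) := by
      rw [hscale]
      field_simp
    rw [hgauss, h8, G_eq_Ii hmem', show (1:ℝ) - (1 - α) = α by ring]
    ring
  have hβ₀ratio : G (1 - β₀) / G β₀ = 2 * (G (1 - α) / G α) := by
    rw [val1, val2]
    have hGα : 0 < G α := G_pos hα.1.le hα.2
    have h9 : (0:ℝ) < 1 + k' := by linarith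
    field_simp
  have heq : (fun b => G (1 - b) / G b) β = (fun b => G (1 - b) / G b) β₀ := by
    simp only
    rw [h, hβ₀ratio]
  exact ratio_injOn hβ hβ₀mem heq
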